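/- For the honeycomb (brick-wall) torus with N a positive multiple of 4, let ψ' be any n-qubit state supported on the face code C_face (ψ' x = 0 for x ∉ C_face) whose nonzero amplitudes all have constant modulus, |ψ' x| = |C_face|^{−1/2} for x ∈ C_face. Then Λ_max(ψ') = |C_face|^{−1/2} and E_G(ψ') = n_p − 1, where n_p = N²/2. In particular the ground state |+,+⟩_DS of the double semion model — whose amplitudes in the local {|+⟩,|−⟩} product basis equal (−1)^{X_c}·|C_face|^{−1/2} on C_face, where X_c counts the loops formed by spins in the |−⟩ state — has geometric entanglement of spins E_G = n_p − 1. (The double semion Theorem of Sec. V.) -/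

import Mathlib

open scoped BigOperators
open scoped Classical

noncomputable section

namespace GeomEnt

def qInner {ι : Type} [Fintype ι] (φ ψ : (ι → ZMod 2) → ℂ) : ℂ :=
  ∑ x : ι → ZMod 2, (starRingEnd ℂ) (φ x) * ψ x

def IsProductState {ι : Type} [Fintype ι] (Φ : (ι → ZMod 2) → ℂ) : Prop :=
  ∃ φ : ι → ZMod 2 → ℂ,
    (∀ i, ‖φ i 0‖ ^ 2 + ‖φ i 1‖ ^ 2 = 1) ∧
    ∀ x, Φ x = ∏ i, φ i (x i)

def LambdaMax {ι : Type} [Fintype ι] (ψ : (ι → ZMod 2) → ℂ) : ℝ :=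
  sSup { r : ℝ | ∃ Φ, IsProductState Φ ∧ r = ‖qInner Φ ψ‖ }

def EG {ι : Type} [Fintype ι] (ψ : (ι → ZMod 2) → ℂ) : ℝ :=
  - Real.logb 2 (LambdaMax ψ ^ 2)

/-- Vertices of the N × N brick-wall (honeycomb) torus. -/
abbrev HVertex (N : ℕ) := ZMod N × ZMod N

/-- Edges of the brick-wall honeycomb torus. -/
abbrev HEdge (N : ℕ) := HVertex N ⊕ { p : HVertex N // Even (p.1.val + p.2.val) }

/-- Indicator vector of the boundary of the hexagonal face F(i,j) (for i+j even). -/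
def faceBd (N : ℕ) (p : HVertex N) : HEdge N → ZMod 2 :=
  fun e =>
    match e with
    | Sum.inl q =>
        if q = p ∨ q = p + (1, 0) ∨ q = p + (0, 1) ∨ q = p + (1, 1) then 1 else 0
    | Sum.inr q => if q.1 = p ∨ q.1 = p + (2, 0) then 1 else 0

/-- The face code: F₂-span of the indicator vectors of the face boundaries. -/
def Cface (N : ℕ) : Submodule (ZMod 2) (HEdge N → ZMod 2) :=
  Submodule.span (ZMod 2)
    { f | ∃ p : HVertex N, Even (p.1.val + p.2.val) ∧ f = faceBd N p }

section Parity
variable {N : ℕ} [NeZero N]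

lemma z2_cases : ∀ a : ZMod 2, a = 0 ∨ a = 1 := by decide
lemma z2_add_self : ∀ a : ZMod 2, a + a = 0 := by decide
lemma z2_add_eq_zero : ∀ a b : ZMod 2, (a + b = 0 ↔ a = b) := by decide
lemma z2_sub_eq_add : ∀ a b : ZMod 2, a - b = a + b := by decide
lemma z2_ne_zero : ∀ a : ZMod 2, a ≠ 0 → a = 1 := by decide

def par (a : ZMod N) : ZMod 2 := (a.val : ZMod 2)

omit [NeZero N] in
lemma natCast_zmod2_of_mod (h2 : 2 ∣ N) (x : ℕ) : ((x % N : ℕ) : ZMod 2) = (x : ZMod 2) := by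
  conv_rhs => rw [← Nat.div_add_mod x N]
  push_cast
  have : ((N : ℕ) : ZMod 2) = 0 := (ZMod.natCast_eq_zero_iff N 2).mpr h2
  rw [this]
  ring

omit [NeZero N] in
lemma par_natCast (h2 : 2 ∣ N) (x : ℕ) : par ((x : ZMod N)) = (x : ZMod 2) := by
  unfold par
  rw [ZMod.val_natCast, natCast_zmod2_of_mod h2]

lemma par_add (h2 : 2 ∣ N) (a b : ZMod N) : par (a + b) = par a + par b := by
  unfold par
  rw [ZMod.val_add, natCast_zmod2_of_mod h2]
  push_cast
  ring

omit [NeZero N] in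
lemma par_zero : par (0 : ZMod N) = 0 := by
  unfold par
  simp

omit [NeZero N] in
lemma par_one (hN : 2 ≤ N) : par (1 : ZMod N) = 1 := by
  unfold par
  rw [ZMod.val_one_eq_one_mod]
  have : (1 : ℕ) % N = 1 := Nat.mod_eq_of_lt hN
  rw [this]
  simp

omit [NeZero N] in
lemma par_even_iff (a : ZMod N) : par a = 0 ↔ Even a.val := by
  unfold par
  rw [ZMod.natCast_eq_zero_iff a.val 2, Nat.even_iff, Nat.dvd_iff_mod_eq_zero]

/-- joint parity of a vertex -/
def pfun (p : HVertex N) : ZMod 2 := par p.1 + par p.2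

lemma pfun_add (h2 : 2 ∣ N) (p q : HVertex N) : pfun (p + q) = pfun p + pfun q := by
  unfold pfun
  rw [Prod.fst_add, Prod.snd_add, par_add h2, par_add h2]
  ring

lemma pfun_sub (h2 : 2 ∣ N) (p q : HVertex N) : pfun (p - q) = pfun p + pfun q := by
  have h := pfun_add h2 (p - q) q
  rw [sub_add_cancel] at h
  have key : ∀ x y z : ZMod 2, x = y + z → y = x + z := by decide
  exact key _ _ _ h

omit [NeZero N] in
lemma even_cast_iff (n : ℕ) : Even n ↔ ((n : ℕ) : ZMod 2) = 0 := by
  rw [ZMod.natCast_eq_zero_iff, Nat.even_iff, Nat.dvd_iff_mod_eq_zero]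

omit [NeZero N] in
lemma pfun_even_iff (p : HVertex N) : Even (p.1.val + p.2.val) ↔ pfun p = 0 := by
  unfold pfun par
  have h : ((p.1.val + p.2.val : ℕ) : ZMod 2) = (p.1.val : ZMod 2) + (p.2.val : ZMod 2) := by
    push_cast; ring
  rw [even_cast_iff, h]

lemma pfun_e1 (hN : 2 ≤ N) : pfun ((1, 0) : HVertex N) = 1 := by
  unfold pfun; rw [par_one hN, par_zero]; ring

lemma pfun_e2 (hN : 2 ≤ N) : pfun ((0, 1) : HVertex N) = 1 := by
  unfold pfun; rw [par_one hN, par_zero]; ring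

lemma pfun_d (hN : 2 ≤ N) : pfun ((1, 1) : HVertex N) = 0 := by
  unfold pfun; rw [par_one hN]; exact z2_add_self 1

lemma pfun_v (h2 : 2 ∣ N) (hN : 2 ≤ N) : pfun ((2, 0) : HVertex N) = 0 := by
  have : ((2, 0) : HVertex N) = (1, 0) + (1, 0) := by norm_num
  rw [this, pfun_add h2, pfun_e1 hN]
  exact z2_add_self 1

omit [NeZero N] in
lemma zmod_one_ne_zero (hN : 2 ≤ N) : (1 : ZMod N) ≠ 0 := by
  intro h
  have : ((1 : ℕ) : ZMod N) = 0 := by exact_mod_cast h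
  rw [ZMod.natCast_eq_zero_iff] at this
  have := Nat.le_of_dvd one_pos this
  omega

omit [NeZero N] in
lemma zmod_two_ne_zero (hN : 3 ≤ N) : (2 : ZMod N) ≠ 0 := by
  intro h
  have : ((2 : ℕ) : ZMod N) = 0 := by exact_mod_cast h
  rw [ZMod.natCast_eq_zero_iff] at this
  have := Nat.le_of_dvd (by norm_num) this
  omega

end Parity

section Struct
variable {N : ℕ} [NeZero N]

abbrev Fc (N : ℕ) := { p : HVertex N // Even (p.1.val + p.2.val) }

def Dfun (s : Fc N → ZMod 2) : HEdge N → ZMod 2 :=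
  fun e => ∑ p : Fc N, s p * faceBd N p.1 e

/-- extension of a face function to all vertices -/
def tf (s : Fc N → ZMod 2) (p : HVertex N) : ZMod 2 :=
  if h : Even (p.1.val + p.2.val) then s ⟨p, h⟩ else 0

lemma tf_at (s : Fc N → ZMod 2) (p : HVertex N) (h : Even (p.1.val + p.2.val)) :
    tf s p = s ⟨p, h⟩ := dif_pos h

lemma faceBd_inl (p q : HVertex N) :
    faceBd N p (Sum.inl q) =
      if q = p ∨ q = p + (1, 0) ∨ q = p + (0, 1) ∨ q = p + (1, 1) then 1 else 0 := rfl

lemma faceBd_inr (p : HVertex N) (q : Fc N) :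
    faceBd N p (Sum.inr q) = if q.1 = p ∨ q.1 = p + (2, 0) then 1 else 0 := rfl

lemma Dfun_inl_even (h2 : 2 ∣ N) (hN : 4 ≤ N) (s : Fc N → ZMod 2) (q : HVertex N)
    (hq : pfun q = 0) :
    Dfun s (Sum.inl q) = tf s q + tf s (q - (1, 1)) := by
  have hN2 : 2 ≤ N := by omega
  have hqe : Even (q.1.val + q.2.val) := (pfun_even_iff q).mpr hq
  have hbp : pfun (q - (1, 1)) = 0 := by
    rw [pfun_sub h2, pfun_d hN2, hq]; ring
  have hbe : Even ((q - (1,1)).1.val + (q - (1,1)).2.val) := (pfun_even_iff _).mpr hbp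
  set a : Fc N := ⟨q, hqe⟩ with ha
  set b : Fc N := ⟨q - (1, 1), hbe⟩ with hb
  have hab : a ≠ b := by
    intro h
    have h1 : q = q - (1, 1) := congrArg Subtype.val h
    have h2' : ((1, 1) : HVertex N) = 0 := sub_eq_self.mp h1.symm
    have := congrArg Prod.fst h2'
    exact zmod_one_ne_zero hN2 this
  have key := Finset.sum_eq_add (s := Finset.univ)
      (f := fun p : Fc N => s p * faceBd N p.1 (Sum.inl q)) a b hab
      (by
        intro c _ hc
        show s c * faceBd N c.1 (Sum.inl q) = 0
        rw [faceBd_inl]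
        by_cases hcond : q = c.1 ∨ q = c.1 + (1, 0) ∨ q = c.1 + (0, 1) ∨ q = c.1 + (1, 1)
        · exfalso
          have hce : pfun c.1 = 0 := (pfun_even_iff c.1).mp c.2
          rcases hcond with h | h | h | h
          · exact hc.1 (Subtype.ext h.symm)
          · rw [h, pfun_add h2, hce, pfun_e1 hN2] at hq
            simp at hq
          · rw [h, pfun_add h2, hce, pfun_e2 hN2] at hq
            simp at hq
          · exact hc.2 (Subtype.ext (sub_eq_of_eq_add h).symm)
        · rw [if_neg hcond, mul_zero])
      (fun h => absurd (Finset.mem_univ a) h)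
      (fun h => absurd (Finset.mem_univ b) h)
  show (∑ p : Fc N, s p * faceBd N p.1 (Sum.inl q)) = _
  rw [key]
  show s a * faceBd N a.1 (Sum.inl q) + s b * faceBd N b.1 (Sum.inl q) = _
  rw [faceBd_inl, faceBd_inl]
  rw [if_pos (Or.inl rfl), if_pos (Or.inr (Or.inr (Or.inr (sub_add_cancel q (1,1)).symm)))]
  rw [mul_one, mul_one, tf_at s q hqe, tf_at s _ hbe]

lemma Dfun_inl_odd (h2 : 2 ∣ N) (hN : 4 ≤ N) (s : Fc N → ZMod 2) (q : HVertex N)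
    (hq : pfun q = 1) :
    Dfun s (Sum.inl q) = tf s (q - (1, 0)) + tf s (q - (0, 1)) := by
  have hN2 : 2 ≤ N := by omega
  have hap : pfun (q - (1, 0)) = 0 := by
    rw [pfun_sub h2, pfun_e1 hN2, hq]; exact z2_add_self 1
  have hbp : pfun (q - (0, 1)) = 0 := by
    rw [pfun_sub h2, pfun_e2 hN2, hq]; exact z2_add_self 1
  have hae : Even ((q - (1,0)).1.val + (q - (1,0)).2.val) := (pfun_even_iff _).mpr hap
  have hbe : Even ((q - (0,1)).1.val + (q - (0,1)).2.val) := (pfun_even_iff _).mpr hbp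
  set a : Fc N := ⟨q - (1, 0), hae⟩ with ha
  set b : Fc N := ⟨q - (0, 1), hbe⟩ with hb
  have hab : a ≠ b := by
    intro h
    have h1 : q - (1, 0) = q - (0, 1) := congrArg Subtype.val h
    have h2' : ((1, 0) : HVertex N) = (0, 1) := by
      have := sub_right_injective h1
      exact this
    have := congrArg Prod.fst h2'
    exact zmod_one_ne_zero hN2 this
  have key := Finset.sum_eq_add (s := Finset.univ)
      (f := fun p : Fc N => s p * faceBd N p.1 (Sum.inl q)) a b hab
      (by
        intro c _ hc
        show s c * faceBd N c.1 (Sum.inl q) = 0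
        rw [faceBd_inl]
        by_cases hcond : q = c.1 ∨ q = c.1 + (1, 0) ∨ q = c.1 + (0, 1) ∨ q = c.1 + (1, 1)
        · exfalso
          have hce : pfun c.1 = 0 := (pfun_even_iff c.1).mp c.2
          rcases hcond with h | h | h | h
          · rw [h, hce] at hq; simp at hq
          · exact hc.1 (Subtype.ext (sub_eq_of_eq_add h).symm)
          · exact hc.2 (Subtype.ext (sub_eq_of_eq_add h).symm)
          · rw [h, pfun_add h2, hce, pfun_d hN2] at hq; simp at hq
        · rw [if_neg hcond, mul_zero])
      (fun h => absurd (Finset.mem_univ a) h)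
      (fun h => absurd (Finset.mem_univ b) h)
  show (∑ p : Fc N, s p * faceBd N p.1 (Sum.inl q)) = _
  rw [key]
  show s a * faceBd N a.1 (Sum.inl q) + s b * faceBd N b.1 (Sum.inl q) = _
  rw [faceBd_inl, faceBd_inl]
  rw [if_pos (Or.inr (Or.inl (sub_add_cancel q (1,0)).symm)),
      if_pos (Or.inr (Or.inr (Or.inl (sub_add_cancel q (0,1)).symm)))]
  rw [mul_one, mul_one, tf_at s _ hae, tf_at s _ hbe]

lemma Dfun_inr (h2 : 2 ∣ N) (hN : 4 ≤ N) (s : Fc N → ZMod 2) (q : Fc N) :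
    Dfun s (Sum.inr q) = tf s q.1 + tf s (q.1 - (2, 0)) := by
  have hN2 : 2 ≤ N := by omega
  have hbp : pfun (q.1 - (2, 0)) = 0 := by
    rw [pfun_sub h2, pfun_v h2 hN2, (pfun_even_iff q.1).mp q.2]; ring
  have hbe : Even ((q.1 - (2,0)).1.val + (q.1 - (2,0)).2.val) := (pfun_even_iff _).mpr hbp
  set b : Fc N := ⟨q.1 - (2, 0), hbe⟩ with hb
  have hab : q ≠ b := by
    intro h
    have h1 : q.1 = q.1 - (2, 0) := congrArg Subtype.val h
    have h2' : ((2, 0) : HVertex N) = 0 := sub_eq_self.mp h1.symm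
    have := congrArg Prod.fst h2'
    exact zmod_two_ne_zero (by omega) this
  have key := Finset.sum_eq_add (s := Finset.univ)
      (f := fun p : Fc N => s p * faceBd N p.1 (Sum.inr q)) q b hab
      (by
        intro c _ hc
        show s c * faceBd N c.1 (Sum.inr q) = 0
        rw [faceBd_inr]
        by_cases hcond : q.1 = c.1 ∨ q.1 = c.1 + (2, 0)
        · exfalso
          rcases hcond with h | h
          · exact hc.1 (Subtype.ext h.symm)
          · exact hc.2 (Subtype.ext (sub_eq_of_eq_add h).symm)
        · rw [if_neg hcond, mul_zero])
      (fun h => absurd (Finset.mem_univ q) h)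
      (fun h => absurd (Finset.mem_univ b) h)
  show (∑ p : Fc N, s p * faceBd N p.1 (Sum.inr q)) = _
  rw [key]
  show s q * faceBd N q.1 (Sum.inr q) + s b * faceBd N b.1 (Sum.inr q) = _
  rw [faceBd_inr, faceBd_inr]
  rw [if_pos (Or.inl rfl), if_pos (Or.inr (sub_add_cancel q.1 (2,0)).symm)]
  rw [mul_one, mul_one, tf_at s q.1 q.2, tf_at s _ hbe]

lemma Dfun_sub (s s' : Fc N → ZMod 2) : Dfun (s - s') = Dfun s - Dfun s' := by
  funext e
  show (∑ p : Fc N, (s - s') p * faceBd N p.1 e) = _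
  have : ∀ p : Fc N, (s - s') p * faceBd N p.1 e
      = s p * faceBd N p.1 e - s' p * faceBd N p.1 e := by
    intro p; rw [Pi.sub_apply, sub_mul]
  rw [Finset.sum_congr rfl (fun p _ => this p), Finset.sum_sub_distrib]
  rfl

lemma Dfun_single (a : Fc N) : Dfun (Pi.single a 1) = faceBd N a.1 := by
  funext e
  show (∑ p : Fc N, (Pi.single a 1 : Fc N → ZMod 2) p * faceBd N p.1 e) = _
  rw [Finset.sum_eq_single a]
  · rw [Pi.single_eq_same, one_mul]
  · intro c _ hc
    rw [Pi.single_eq_of_ne hc, zero_mul]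
  · intro h; exact absurd (Finset.mem_univ a) h

lemma Dfun_mem (s : Fc N → ZMod 2) : Dfun s ∈ Cface N := by
  have : Dfun s = ∑ p : Fc N, s p • faceBd N p.1 := by
    funext e
    rw [Finset.sum_apply]
    rfl
  rw [this]
  apply Submodule.sum_mem
  intro p _
  apply Submodule.smul_mem
  apply Submodule.subset_span
  exact ⟨p.1, p.2, rfl⟩

lemma mem_Cface {x : HEdge N → ZMod 2} :
    x ∈ Cface N ↔ ∃ s : Fc N → ZMod 2, x = Dfun s := by
  constructor
  · intro hx
    refine Submodule.span_induction (p := fun y _ => ∃ s : Fc N → ZMod 2, y = Dfun s)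
      ?_ ?_ ?_ ?_ hx
    · rintro f ⟨p, hp, rfl⟩
      exact ⟨Pi.single ⟨p, hp⟩ 1, (Dfun_single (⟨p, hp⟩ : Fc N)).symm⟩
    · refine ⟨0, ?_⟩
      funext e
      show (0 : ZMod 2) = ∑ p : Fc N, (0 : Fc N → ZMod 2) p * faceBd N p.1 e
      simp
    · rintro f g - - ⟨s, rfl⟩ ⟨s', rfl⟩
      refine ⟨s + s', ?_⟩
      funext e
      show Dfun s e + Dfun s' e = Dfun (s + s') e
      show (∑ p : Fc N, s p * faceBd N p.1 e) + (∑ p : Fc N, s' p * faceBd N p.1 e)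
          = ∑ p : Fc N, (s + s') p * faceBd N p.1 e
      rw [← Finset.sum_add_distrib]
      apply Finset.sum_congr rfl
      intro p _
      rw [Pi.add_apply, add_mul]
    · rintro c f - ⟨s, rfl⟩
      rcases z2_cases c with rfl | rfl
      · exact ⟨0, by
          funext e
          show (0 : ZMod 2) • Dfun s e = ∑ p : Fc N, (0 : Fc N → ZMod 2) p * faceBd N p.1 e
          simp⟩
      · exact ⟨s, by rw [one_smul]⟩
  · rintro ⟨s, rfl⟩
    exact Dfun_mem s

end Struct

section Conn
variable {N : ℕ} [NeZero N]

lemma par_sub (h2 : 2 ∣ N) (a b : ZMod N) : par (a - b) = par a + par b := by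
  have h := par_add h2 (a - b) b
  rw [sub_add_cancel] at h
  have key : ∀ x y z : ZMod 2, x = y + z → y = x + z := by decide
  exact key _ _ _ h

lemma par_neg (h2 : 2 ∣ N) (a : ZMod N) : par (-a) = par a := by
  have : -a = 0 - a := by ring
  rw [this, par_sub h2, par_zero, zero_add]

lemma diag_smul_comp (k : ℕ) :
    k • ((1, 1) : HVertex N) = (((k : ZMod N)), ((k : ZMod N))) := by
  rw [Prod.smul_mk]
  rw [nsmul_eq_mul, mul_one]

lemma adiag_smul_comp (k : ℕ) :
    k • ((1, -1) : HVertex N) = (((k : ZMod N)), (-(k : ZMod N))) := by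
  rw [Prod.smul_mk]
  rw [nsmul_eq_mul, nsmul_eq_mul, mul_one, mul_neg_one]

lemma pfun_diag_smul (h2 : 2 ∣ N) (k : ℕ) : pfun (k • ((1, 1) : HVertex N)) = 0 := by
  rw [diag_smul_comp]
  show par ((k : ZMod N)) + par ((k : ZMod N)) = 0
  exact z2_add_self _

lemma pfun_adiag_smul (h2 : 2 ∣ N) (k : ℕ) : pfun (k • ((1, -1) : HVertex N)) = 0 := by
  rw [adiag_smul_comp]
  show par ((k : ZMod N)) + par (-(k : ZMod N)) = 0
  rw [par_neg h2]
  exact z2_add_self _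

variable (t : HVertex N → ZMod 2)

lemma chainA (h2 : 2 ∣ N)
    (hA : ∀ q : HVertex N, pfun q = 0 → t q = t (q - (1, 1))) :
    ∀ (k : ℕ) (q : HVertex N), pfun q = 0 → t q = t (q - k • ((1, 1) : HVertex N)) := by
  intro k
  induction k with
  | zero => intro q _; simp
  | succ k ih =>
    intro q hq
    have he : pfun (q - k • ((1, 1) : HVertex N)) = 0 := by
      rw [pfun_sub h2, hq, pfun_diag_smul h2]; ring
    have step := hA _ he
    rw [succ_nsmul, sub_add_eq_sub_sub]
    rw [← step]
    exact ih q hq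

lemma chainA' (h2 : 2 ∣ N)
    (hA : ∀ q : HVertex N, pfun q = 0 → t q = t (q + (1, -1))) :
    ∀ (k : ℕ) (q : HVertex N), pfun q = 0 → t q = t (q + k • ((1, -1) : HVertex N)) := by
  intro k
  induction k with
  | zero => intro q _; simp
  | succ k ih =>
    intro q hq
    have he : pfun (q + k • ((1, -1) : HVertex N)) = 0 := by
      rw [pfun_add h2, hq, pfun_adiag_smul h2]; ring
    have step := hA _ he
    rw [succ_nsmul, ← add_assoc]
    rw [← step]
    exact ih q hq

lemma rowchain (h2 : 2 ∣ N) (hN : 4 ≤ N)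
    (hA : ∀ q : HVertex N, pfun q = 0 → t q = t (q - (1, 1)))
    (hV : ∀ q : HVertex N, pfun q = 0 → q.2 ≠ 0 → t q = t (q - (2, 0))) :
    ∀ k : ℕ, t (((2 * k : ℕ) : ZMod N), 0) = t ((0, 0) : HVertex N) := by
  have hN2 : 2 ≤ N := by omega
  intro k
  induction k with
  | zero => norm_num
  | succ k ih =>
    set d : ZMod N := ((2 * (k + 1) : ℕ) : ZMod N) with hd
    have hpard : par d = 0 := by
      rw [hd, par_natCast h2]
      have : ((2 * (k + 1) : ℕ) : ZMod 2) = 0 := by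
        rw [ZMod.natCast_eq_zero_iff]
        exact ⟨k + 1, rfl⟩
      exact this
    -- step through (d+1, 1)
    have hpe : pfun ((d + 1, 1) : HVertex N) = 0 := by
      show par (d + 1) + par 1 = 0
      rw [par_add h2, hpard, par_one hN2]
      decide
    have s1 : t (d + 1, 1) = t ((d, 0) : HVertex N) := by
      have := hA _ hpe
      convert this using 2
      show ((d, 0) : HVertex N) = (d + 1, 1) - (1, 1)
      rw [Prod.mk_sub_mk]
      simp only [Prod.mk.injEq]
      constructor <;> ring
    have s2 : t (d + 1, 1) = t ((d - 1, 1) : HVertex N) := by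
      have := hV _ hpe (by
        show (1 : ZMod N) ≠ 0
        exact zmod_one_ne_zero hN2)
      convert this using 2
      show ((d - 1, 1) : HVertex N) = (d + 1, 1) - (2, 0)
      rw [Prod.mk_sub_mk]
      simp only [Prod.mk.injEq]
      constructor <;> ring
    have hpe2 : pfun ((d - 1, 1) : HVertex N) = 0 := by
      show par (d - 1) + par 1 = 0
      rw [par_sub h2, hpard, par_one hN2]
      decide
    have s3 : t (d - 1, 1) = t ((d - 2, 0) : HVertex N) := by
      have := hA _ hpe2
      convert this using 2
      show ((d - 2, 0) : HVertex N) = (d - 1, 1) - (1, 1)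
      rw [Prod.mk_sub_mk]
      simp only [Prod.mk.injEq]
      constructor <;> ring
    have hcast : d - 2 = ((2 * k : ℕ) : ZMod N) := by
      rw [hd]
      push_cast
      ring
    rw [← s1, s2, s3, hcast] at *
    exact ih

lemma rowchain' (h2 : 2 ∣ N) (hN : 4 ≤ N)
    (hV : ∀ q : HVertex N, pfun q = 0 → q.2 = 0 → t q = t (q - (2, 0))) :
    ∀ k : ℕ, t (((2 * k : ℕ) : ZMod N), 0) = t ((0, 0) : HVertex N) := by
  intro k
  induction k with
  | zero => norm_num
  | succ k ih =>
    set d : ZMod N := ((2 * (k + 1) : ℕ) : ZMod N) with hd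
    have hpard : par d = 0 := by
      rw [hd, par_natCast h2]
      have : ((2 * (k + 1) : ℕ) : ZMod 2) = 0 := by
        rw [ZMod.natCast_eq_zero_iff]
        exact ⟨k + 1, rfl⟩
      exact this
    have hpe : pfun ((d, 0) : HVertex N) = 0 := by
      show par d + par 0 = 0
      rw [hpard, par_zero]
      ring
    have s1 : t ((d, 0) : HVertex N) = t ((d - 2, 0) : HVertex N) := by
      have := hV _ hpe rfl
      convert this using 2
      show ((d - 2, 0) : HVertex N) = (d, 0) - (2, 0)
      rw [Prod.mk_sub_mk]
      simp only [Prod.mk.injEq]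
      constructor <;> simp
    have hcast : d - 2 = ((2 * k : ℕ) : ZMod N) := by
      rw [hd]; push_cast; ring
    rw [s1, hcast]
    exact ih

lemma val_even_rep {a : ZMod N} (ha : par a = 0) :
    ∃ k : ℕ, a = ((2 * k : ℕ) : ZMod N) := by
  obtain ⟨c, hc⟩ := (par_even_iff a).mp ha
  refine ⟨c, ?_⟩
  have : a = ((a.val : ℕ) : ZMod N) := by
    rw [ZMod.natCast_val, ZMod.cast_id]
  rw [this, hc]
  congr 1
  omega

lemma constB (h2 : 2 ∣ N) (hN : 4 ≤ N)
    (hA : ∀ q : HVertex N, pfun q = 0 → t q = t (q - (1, 1)))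
    (hV : ∀ q : HVertex N, pfun q = 0 → q.2 ≠ 0 → t q = t (q - (2, 0))) :
    ∀ q : HVertex N, pfun q = 0 → t q = t ((0, 0) : HVertex N) := by
  intro q hq
  have h1 : t q = t (q - (q.2.val) • ((1, 1) : HVertex N)) := chainA t h2 hA _ q hq
  have hcomp : q - (q.2.val) • ((1, 1) : HVertex N) = ((q.1 - q.2, 0) : HVertex N) := by
    rw [diag_smul_comp]
    have hv : ((q.2.val : ℕ) : ZMod N) = q.2 := by
      rw [ZMod.natCast_val, ZMod.cast_id]
    have : q = (q.1, q.2) := rfl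
    rw [this, Prod.mk_sub_mk, hv]
    norm_num
  rw [hcomp] at h1
  have hpd : par (q.1 - q.2) = 0 := by
    rw [par_sub h2]
    exact hq
  obtain ⟨k, hk⟩ := val_even_rep hpd
  rw [h1, hk]
  exact rowchain t h2 hN hA hV k

lemma constB' (h2 : 2 ∣ N) (hN : 4 ≤ N)
    (hA : ∀ q : HVertex N, pfun q = 0 → t q = t (q + (1, -1)))
    (hV : ∀ q : HVertex N, pfun q = 0 → q.2 = 0 → t q = t (q - (2, 0))) :
    ∀ q : HVertex N, pfun q = 0 → t q = t ((0, 0) : HVertex N) := by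
  intro q hq
  have h1 : t q = t (q + (q.2.val) • ((1, -1) : HVertex N)) := chainA' t h2 hA _ q hq
  have hcomp : q + (q.2.val) • ((1, -1) : HVertex N) = ((q.1 + q.2, 0) : HVertex N) := by
    rw [adiag_smul_comp]
    have hv : ((q.2.val : ℕ) : ZMod N) = q.2 := by
      rw [ZMod.natCast_val, ZMod.cast_id]
    have : q = (q.1, q.2) := rfl
    rw [this, Prod.mk_add_mk, hv]
    norm_num
  rw [hcomp] at h1
  have hpd : par (q.1 + q.2) = 0 := by
    rw [par_add h2]
    exact hq
  obtain ⟨k, hk⟩ := val_even_rep hpd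
  rw [h1, hk]
  exact rowchain' t h2 hN hV k

end Conn

section Inj
variable {N : ℕ} [NeZero N]

/-- first class of edges: even horizontals and verticals off row 0 -/
lemma pfun_zero : pfun ((0, 0) : HVertex N) = 0 := by
  show par (0 : ZMod N) + par 0 = 0
  rw [par_zero]; decide

def isB (e : HEdge N) : Prop :=
  match e with
  | Sum.inl q => pfun q = 0
  | Sum.inr q => q.1.2 ≠ 0

lemma Dfun_eq_zero_of_const (h2 : 2 ∣ N) (hN : 4 ≤ N) (u : Fc N → ZMod 2)
    (hc : ∀ q : HVertex N, pfun q = 0 → tf u q = tf u ((0, 0) : HVertex N)) :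
    Dfun u = 0 := by
  have hN2 : 2 ≤ N := by omega
  funext e
  cases e with
  | inl q =>
    rcases z2_cases (pfun q) with hq | hq
    · rw [Dfun_inl_even h2 hN u q hq]
      have h1 : pfun (q - (1, 1)) = 0 := by
        rw [pfun_sub h2, hq, pfun_d hN2]; decide
      rw [hc q hq, hc _ h1]
      exact z2_add_self _
    · rw [Dfun_inl_odd h2 hN u q hq]
      have h1 : pfun (q - (1, 0)) = 0 := by
        rw [pfun_sub h2, hq, pfun_e1 hN2]; decide
      have h2' : pfun (q - (0, 1)) = 0 := by
        rw [pfun_sub h2, hq, pfun_e2 hN2]; decide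
      rw [hc _ h1, hc _ h2']
      exact z2_add_self _
  | inr q =>
    rw [Dfun_inr h2 hN u q]
    have hq : pfun q.1 = 0 := (pfun_even_iff q.1).mp q.2
    have h1 : pfun (q.1 - (2, 0)) = 0 := by
      rw [pfun_sub h2, hq, pfun_v h2 hN2]; decide
    rw [hc _ hq, hc _ h1]
    exact z2_add_self _

lemma Dfun_const_eq_zero (h2 : 2 ∣ N) (hN : 4 ≤ N) (c : ZMod 2) :
    Dfun (fun _ : Fc N => c) = 0 := by
  apply Dfun_eq_zero_of_const h2 hN
  intro q hq
  rw [tf_at _ q ((pfun_even_iff q).mpr hq),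
    tf_at _ _ ((pfun_even_iff ((0,0) : HVertex N)).mpr pfun_zero)]

lemma eq_on_B (h2 : 2 ∣ N) (hN : 4 ≤ N) {x y : HEdge N → ZMod 2}
    (hx : x ∈ Cface N) (hy : y ∈ Cface N) (h : ∀ e, isB e → x e = y e) : x = y := by
  have hN2 : 2 ≤ N := by omega
  obtain ⟨s, rfl⟩ := mem_Cface.mp hx
  obtain ⟨s', rfl⟩ := mem_Cface.mp hy
  suffices hz : Dfun (s - s') = 0 by
    have := Dfun_sub s s'
    rw [hz] at this
    exact (sub_eq_zero.mp this.symm)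
  set u := s - s' with hu
  have hzero : ∀ e : HEdge N, isB e → Dfun u e = 0 := by
    intro e he
    rw [hu, Dfun_sub, Pi.sub_apply, h e he, sub_self]
  have hA : ∀ q : HVertex N, pfun q = 0 → tf u q = tf u (q - (1, 1)) := by
    intro q hq
    have hD := hzero (Sum.inl q) hq
    rw [Dfun_inl_even h2 hN u q hq] at hD
    exact (z2_add_eq_zero _ _).mp hD
  have hV : ∀ q : HVertex N, pfun q = 0 → q.2 ≠ 0 → tf u q = tf u (q - (2, 0)) := by
    intro q hq hq2
    have hD := hzero (Sum.inr ⟨q, (pfun_even_iff q).mpr hq⟩) hq2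
    rw [Dfun_inr h2 hN u ⟨q, (pfun_even_iff q).mpr hq⟩] at hD
    exact (z2_add_eq_zero _ _).mp hD
  exact Dfun_eq_zero_of_const h2 hN u (constB (tf u) h2 hN hA hV)

/-- complementary class: odd horizontals and verticals on row 0 -/
def isBc (e : HEdge N) : Prop :=
  match e with
  | Sum.inl q => pfun q = 1
  | Sum.inr q => q.1.2 = 0

lemma eq_on_Bc (h2 : 2 ∣ N) (hN : 4 ≤ N) {x y : HEdge N → ZMod 2}
    (hx : x ∈ Cface N) (hy : y ∈ Cface N) (h : ∀ e, isBc e → x e = y e) : x = y := by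
  have hN2 : 2 ≤ N := by omega
  obtain ⟨s, rfl⟩ := mem_Cface.mp hx
  obtain ⟨s', rfl⟩ := mem_Cface.mp hy
  suffices hz : Dfun (s - s') = 0 by
    have := Dfun_sub s s'
    rw [hz] at this
    exact (sub_eq_zero.mp this.symm)
  set u := s - s' with hu
  have hzero : ∀ e : HEdge N, isBc e → Dfun u e = 0 := by
    intro e he
    rw [hu, Dfun_sub, Pi.sub_apply, h e he, sub_self]
  have hA : ∀ q : HVertex N, pfun q = 0 → tf u q = tf u (q + (1, -1)) := by
    intro q hq
    have hodd : pfun (q + (1, 0)) = 1 := by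
      rw [pfun_add h2, hq, pfun_e1 hN2]; decide
    have hD := hzero (Sum.inl (q + (1, 0))) hodd
    rw [Dfun_inl_odd h2 hN u _ hodd] at hD
    have e1 : q + (1, 0) - (1, 0) = q := add_sub_cancel_right q (1, 0)
    have e2 : q + (1, 0) - (0, 1) = q + (1, -1) := by
      rw [add_sub_assoc]
      congr 1
      rw [Prod.mk_sub_mk]
      simp only [Prod.mk.injEq]
      constructor <;> ring
    rw [e1, e2] at hD
    exact (z2_add_eq_zero _ _).mp hD
  have hV : ∀ q : HVertex N, pfun q = 0 → q.2 = 0 → tf u q = tf u (q - (2, 0)) := by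
    intro q hq hq2
    have hD := hzero (Sum.inr ⟨q, (pfun_even_iff q).mpr hq⟩) hq2
    rw [Dfun_inr h2 hN u ⟨q, (pfun_even_iff q).mpr hq⟩] at hD
    exact (z2_add_eq_zero _ _).mp hD
  exact Dfun_eq_zero_of_const h2 hN u (constB' (tf u) h2 hN hA hV)

lemma ker_const (h2 : 2 ∣ N) (hN : 4 ≤ N) {u : Fc N → ZMod 2}
    (hz : Dfun u = 0) : ∀ p p' : Fc N, u p = u p' := by
  have hzero : ∀ e : HEdge N, Dfun u e = 0 := fun e => congrFun hz e
  have hA : ∀ q : HVertex N, pfun q = 0 → tf u q = tf u (q - (1, 1)) := by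
    intro q hq
    have hD := hzero (Sum.inl q)
    rw [Dfun_inl_even h2 hN u q hq] at hD
    exact (z2_add_eq_zero _ _).mp hD
  have hV : ∀ q : HVertex N, pfun q = 0 → q.2 ≠ 0 → tf u q = tf u (q - (2, 0)) := by
    intro q hq _
    have hD := hzero (Sum.inr ⟨q, (pfun_even_iff q).mpr hq⟩)
    rw [Dfun_inr h2 hN u ⟨q, (pfun_even_iff q).mpr hq⟩] at hD
    exact (z2_add_eq_zero _ _).mp hD
  have hconst := constB (tf u) h2 hN hA hV
  intro p p'
  have h1 : u p = tf u p.1 := (tf_at u p.1 p.2).symm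
  have h2' : u p' = tf u p'.1 := (tf_at u p'.1 p'.2).symm
  rw [h1, h2', hconst p.1 ((pfun_even_iff p.1).mp p.2), hconst p'.1 ((pfun_even_iff p'.1).mp p'.2)]

end Inj

section Count
variable {N : ℕ} [NeZero N]

lemma card_Fc (h2 : 2 ∣ N) : Nat.card (Fc N) = N ^ 2 / 2 := by
  classical
  let φ : HVertex N →+ ZMod 2 := AddMonoidHom.mk' pfun (pfun_add h2)
  have hN2 : 2 ≤ N := by
    rcases h2 with ⟨k, hk⟩
    have : N ≠ 0 := NeZero.ne N
    omega
  have hsurj : Function.Surjective φ := by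
    intro b
    rcases z2_cases b with rfl | rfl
    · exact ⟨(0, 0), pfun_zero⟩
    · exact ⟨(1, 0), pfun_e1 hN2⟩
  have hcardG : Nat.card (HVertex N) = N ^ 2 := by
    rw [Nat.card_prod, Nat.card_zmod]
    ring
  have hquot : Nat.card (HVertex N ⧸ φ.ker) = 2 := by
    rw [Nat.card_congr (QuotientAddGroup.quotientKerEquivOfSurjective φ hsurj).toEquiv]
    simp [Nat.card_zmod]
  have hlag := AddSubgroup.card_eq_card_quotient_mul_card_addSubgroup φ.ker
  rw [hcardG, hquot] at hlag
  have hface : Nat.card (Fc N) = Nat.card φ.ker := by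
    apply Nat.card_congr
    apply Equiv.subtypeEquivRight
    intro p
    rw [AddMonoidHom.mem_ker]
    exact (pfun_even_iff p)
  rw [hface]
  omega

instance : Nonempty (Fc N) :=
  ⟨⟨((0, 0) : HVertex N), (pfun_even_iff _).mpr pfun_zero⟩⟩

/-- the boundary map as a linear map -/
def DL : (Fc N → ZMod 2) →ₗ[ZMod 2] (HEdge N → ZMod 2) where
  toFun := Dfun
  map_add' s s' := by
    have h := Dfun_sub (s + s') s'
    rw [add_sub_cancel_right] at h
    rw [h]
    abel
  map_smul' c s := by
    rcases z2_cases c with rfl | rfl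
    · show Dfun ((0 : ZMod 2) • s) = (0 : ZMod 2) • Dfun s
      rw [zero_smul, zero_smul]
      funext e
      show (∑ p : Fc N, (0 : Fc N → ZMod 2) p * faceBd N p.1 e) = 0
      simp
    · show Dfun ((1 : ZMod 2) • s) = (1 : ZMod 2) • Dfun s
      rw [one_smul, one_smul]

lemma range_DL : LinearMap.range (DL (N := N)) = Cface N := by
  ext x
  rw [LinearMap.mem_range, mem_Cface]
  constructor
  · rintro ⟨s, rfl⟩; exact ⟨s, rfl⟩
  · rintro ⟨s, rfl⟩; exact ⟨s, rfl⟩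

lemma ker_DL (h2 : 2 ∣ N) (hN : 4 ≤ N) :
    (LinearMap.ker (DL (N := N)) : Set (Fc N → ZMod 2)) = {0, fun _ => 1} := by
  ext u
  simp only [SetLike.mem_coe, LinearMap.mem_ker, Set.mem_insert_iff, Set.mem_singleton_iff]
  constructor
  · intro hu
    have hz : Dfun u = 0 := hu
    have hconst := ker_const h2 hN hz
    set p0 : Fc N := ⟨((0, 0) : HVertex N), (pfun_even_iff _).mpr pfun_zero⟩
    rcases z2_cases (u p0) with h | h
    · left; funext p; rw [hconst p p0, h]; rfl
    · right; funext p; rw [hconst p p0, h]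
  · intro hu
    rcases hu with rfl | rfl
    · exact LinearMap.map_zero _
    · show Dfun (fun _ : Fc N => 1) = 0
      exact Dfun_const_eq_zero h2 hN 1

lemma card_Cface (h2 : 2 ∣ N) (hN : 4 ≤ N) :
    Nat.card (Cface N) = 2 ^ (N ^ 2 / 2 - 1) := by
  classical
  set m := N ^ 2 / 2 with hm
  have hm1 : 1 ≤ m := by
    have : 16 ≤ N ^ 2 := by nlinarith
    omega
  have hker : Nat.card (LinearMap.ker (DL (N := N))) = 2 := by
    have hne : (0 : Fc N → ZMod 2) ≠ (fun _ => 1) := by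
      intro h
      have h0 : (0 : ZMod 2) = 1 := congrFun h (Classical.arbitrary (Fc N))
      exact absurd h0 (by decide)
    have h1 : Nat.card (LinearMap.ker (DL (N := N)))
        = ((LinearMap.ker (DL (N := N)) : Set (Fc N → ZMod 2))).ncard :=
      Nat.card_coe_set_eq _
    rw [h1, ker_DL h2 hN, Set.ncard_pair hne]
  have hdom : Nat.card (Fc N → ZMod 2) = 2 ^ m := by
    rw [Nat.card_eq_fintype_card, Fintype.card_fun]
    have hz2 : Fintype.card (ZMod 2) = 2 := rfl
    rw [hz2]
    congr 1
    rw [← Nat.card_eq_fintype_card, card_Fc h2]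
  have hlag := Submodule.card_eq_card_quotient_mul_card (LinearMap.ker (DL (N := N)))
  have hiso : Nat.card ((Fc N → ZMod 2) ⧸ LinearMap.ker (DL (N := N)))
      = Nat.card (Cface N) := by
    rw [Nat.card_congr (LinearMap.quotKerEquivRange (DL (N := N))).toEquiv]
    rw [range_DL]
  rw [hdom, hker, hiso] at hlag
  have hpow : 2 ^ m = 2 * 2 ^ (m - 1) := by
    conv_lhs => rw [show m = (m - 1) + 1 by omega]
    rw [pow_succ]
    ring
  rw [hpow] at hlag
  omega

end Count

section Analysis
variable {N : ℕ} [NeZero N]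

lemma zmod2_sum_eq (f : ZMod 2 → ℝ) : ∑ v : ZMod 2, f v = f 0 + f 1 := by
  have huniv : (Finset.univ : Finset (ZMod 2)) = {0, 1} := by decide
  rw [huniv, Finset.sum_insert (by decide), Finset.sum_singleton]

lemma sum_prod_sq_le (E : Finset (HEdge N)) (c : HEdge N → ZMod 2 → ℝ)
    (hpos : ∀ i v, 0 ≤ c i v) (hnorm : ∀ i, c i 0 ^ 2 + c i 1 ^ 2 = 1)
    (T : Finset (HEdge N → ZMod 2))
    (hinj : ∀ x ∈ T, ∀ y ∈ T, (∀ i ∈ E, x i = y i) → x = y) :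
    ∑ x ∈ T, (∏ i ∈ E, c i (x i)) ^ 2 ≤ 1 := by
  classical
  set res : (HEdge N → ZMod 2) → ((a : HEdge N) → a ∈ E → ZMod 2) :=
    fun x => fun a _ => x a with hres
  have hinj' : ∀ x ∈ T, ∀ y ∈ T, res x = res y → x = y := by
    intro x hx y hy h
    exact hinj x hx y hy (fun i hi => congrFun (congrFun h i) hi)
  have h1 : ∑ y ∈ T.image res, (∏ i ∈ E.attach, c i.1 (y i.1 i.2)) ^ 2
      = ∑ x ∈ T, (∏ i ∈ E.attach, c i.1 ((res x) i.1 i.2)) ^ 2 :=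
    Finset.sum_image hinj'
  have hattach : ∀ x : HEdge N → ZMod 2,
      ∏ i ∈ E, c i (x i) = ∏ i ∈ E.attach, c i.1 (x i.1) :=
    fun x => (Finset.prod_attach E (fun i => c i (x i))).symm
  calc ∑ x ∈ T, (∏ i ∈ E, c i (x i)) ^ 2
      = ∑ x ∈ T, (∏ i ∈ E.attach, c i.1 ((res x) i.1 i.2)) ^ 2 := by
        apply Finset.sum_congr rfl
        intro x _
        rw [hattach x]
    _ = ∑ y ∈ T.image res, (∏ i ∈ E.attach, c i.1 (y i.1 i.2)) ^ 2 := h1.symm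
    _ ≤ ∑ y ∈ E.pi (fun _ => (Finset.univ : Finset (ZMod 2))),
          (∏ i ∈ E.attach, c i.1 (y i.1 i.2)) ^ 2 := by
        apply Finset.sum_le_sum_of_subset_of_nonneg
        · intro y hy
          obtain ⟨x, _, rfl⟩ := Finset.mem_image.mp hy
          rw [Finset.mem_pi]
          intro a ha
          exact Finset.mem_univ _
        · intro y _ _
          exact sq_nonneg _
    _ = ∑ y ∈ E.pi (fun _ => (Finset.univ : Finset (ZMod 2))),
          ∏ i ∈ E.attach, (c i.1 (y i.1 i.2)) ^ 2 := by
        apply Finset.sum_congr rfl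
        intro y _
        rw [← Finset.prod_pow]
    _ = ∏ a ∈ E, ∑ v ∈ (Finset.univ : Finset (ZMod 2)), (c a v) ^ 2 :=
        (Finset.prod_sum E (fun _ => (Finset.univ : Finset (ZMod 2)))
          (fun a v => (c a v) ^ 2)).symm
    _ = ∏ a ∈ E, (1 : ℝ) := by
        apply Finset.prod_congr rfl
        intro a _
        rw [zmod2_sum_eq (fun v => (c a v) ^ 2)]
        exact hnorm a
    _ = 1 := Finset.prod_const_one

lemma overlap_le (h2 : 2 ∣ N) (hN : 4 ≤ N)
    (ψ' : (HEdge N → ZMod 2) → ℂ)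
    (hsupp : ∀ x, x ∉ (Cface N : Set (HEdge N → ZMod 2)) → ψ' x = 0)
    (hmod : ∀ x ∈ (Cface N : Set (HEdge N → ZMod 2)),
      ‖ψ' x‖ = (Real.sqrt (Nat.card (Cface N)))⁻¹)
    (Φ : (HEdge N → ZMod 2) → ℂ) (hΦ : IsProductState Φ) :
    ‖qInner Φ ψ'‖ ≤ (Real.sqrt (Nat.card (Cface N)))⁻¹ := by
  letI instD : DecidableEq (HEdge N) := fun a b => Classical.propDecidable (a = b)
  obtain ⟨φ, hφn, hφx⟩ := hΦ
  set lam : ℝ := (Real.sqrt (Nat.card (Cface N)))⁻¹ with hlam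
  have hlam0 : 0 ≤ lam := inv_nonneg.mpr (Real.sqrt_nonneg _)
  set c : HEdge N → ZMod 2 → ℝ := fun i v => ‖φ i v‖ with hc
  have hcpos : ∀ i v, 0 ≤ c i v := fun i v => norm_nonneg _
  have hcnorm : ∀ i, c i 0 ^ 2 + c i 1 ^ 2 = 1 := fun i => hφn i
  set T : Finset (HEdge N → ZMod 2) := Finset.univ.filter (fun x => x ∈ Cface N) with hT
  have hmemT : ∀ x ∈ T, x ∈ Cface N := by
    intro x hx
    exact (Finset.mem_filter.mp hx).2
  have hq : qInner Φ ψ' = ∑ x ∈ T, (starRingEnd ℂ) (Φ x) * ψ' x := by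
    rw [qInner]
    symm
    apply Finset.sum_subset (fun x _ => Finset.mem_univ x)
    intro x _ hx
    have hxc : x ∉ (Cface N : Set (HEdge N → ZMod 2)) := by
      intro hmem
      exact hx (Finset.mem_filter.mpr ⟨Finset.mem_univ x, hmem⟩)
    rw [hsupp x hxc, mul_zero]
  rw [hq]
  have step1 : ‖∑ x ∈ T, (starRingEnd ℂ) (Φ x) * ψ' x‖
      ≤ ∑ x ∈ T, ‖(starRingEnd ℂ) (Φ x) * ψ' x‖ :=
    norm_sum_le _ _
  have step2 : ∀ x ∈ T, ‖(starRingEnd ℂ) (Φ x) * ψ' x‖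
      = (∏ i, c i (x i)) * lam := by
    intro x hx
    rw [norm_mul, Complex.norm_conj, hφx x, norm_prod, hmod x (hmemT x hx)]
  set EB : Finset (HEdge N) := Finset.univ.filter isB with hEB
  set EC : Finset (HEdge N) := Finset.univ.filter (fun i => ¬ isB i) with hEC
  have hmain : ∑ x ∈ T, ∏ i, c i (x i) ≤ 1 := by
    have hsplit : ∀ x : HEdge N → ZMod 2, (∏ i, c i (x i))
        = (∏ i ∈ EB, c i (x i)) * (∏ i ∈ EC, c i (x i)) :=
      fun x => (Finset.prod_filter_mul_prod_filter_not Finset.univ isB (fun i => c i (x i))).symm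
    have CS := Finset.sum_mul_sq_le_sq_mul_sq T
      (fun x => ∏ i ∈ EB, c i (x i)) (fun x => ∏ i ∈ EC, c i (x i))
    have bound1 : ∑ x ∈ T, (∏ i ∈ EB, c i (x i)) ^ 2 ≤ 1 := by
      apply sum_prod_sq_le EB c hcpos hcnorm T
      intro x hx y hy h
      apply eq_on_B h2 hN (hmemT x hx) (hmemT y hy)
      intro e he
      exact h e (Finset.mem_filter.mpr ⟨Finset.mem_univ e, he⟩)
    have bound2 : ∑ x ∈ T, (∏ i ∈ EC, c i (x i)) ^ 2 ≤ 1 := by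
      apply sum_prod_sq_le EC c hcpos hcnorm T
      intro x hx y hy h
      apply eq_on_Bc h2 hN (hmemT x hx) (hmemT y hy)
      intro e he
      apply h e
      apply Finset.mem_filter.mpr
      refine ⟨Finset.mem_univ e, ?_⟩
      cases e with
      | inl q =>
        have hq1 : pfun q = 1 := he
        show ¬ (pfun q = 0)
        rw [hq1]
        decide
      | inr q =>
        have hq1 : q.1.2 = 0 := he
        show ¬ (q.1.2 ≠ 0)
        rw [hq1]
        simp
    have hsum_eq : ∑ x ∈ T, ∏ i, c i (x i)
        = ∑ x ∈ T, (∏ i ∈ EB, c i (x i)) * (∏ i ∈ EC, c i (x i)) :=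
      Finset.sum_congr rfl (fun x _ => hsplit x)
    rw [hsum_eq]
    have hsq : (∑ x ∈ T, (∏ i ∈ EB, c i (x i)) * (∏ i ∈ EC, c i (x i))) ^ 2 ≤ 1 := by
      calc (∑ x ∈ T, (∏ i ∈ EB, c i (x i)) * (∏ i ∈ EC, c i (x i))) ^ 2
          ≤ (∑ x ∈ T, (∏ i ∈ EB, c i (x i)) ^ 2) * (∑ x ∈ T, (∏ i ∈ EC, c i (x i)) ^ 2) := CS
        _ ≤ 1 * 1 := by
            apply mul_le_mul bound1 bound2 ?_ ?_
            · apply Finset.sum_nonneg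
              intro x _
              exact sq_nonneg _
            · norm_num
        _ = 1 := by norm_num
    have hsumnonneg : 0 ≤ ∑ x ∈ T, (∏ i ∈ EB, c i (x i)) * (∏ i ∈ EC, c i (x i)) := by
      apply Finset.sum_nonneg
      intro x _
      apply mul_nonneg
      · exact Finset.prod_nonneg (fun i _ => hcpos i _)
      · exact Finset.prod_nonneg (fun i _ => hcpos i _)
    nlinarith
  calc ‖∑ x ∈ T, (starRingEnd ℂ) (Φ x) * ψ' x‖
      ≤ ∑ x ∈ T, ‖(starRingEnd ℂ) (Φ x) * ψ' x‖ := step1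
    _ = ∑ x ∈ T, (∏ i, c i (x i)) * lam := Finset.sum_congr rfl step2
    _ = (∑ x ∈ T, ∏ i, c i (x i)) * lam := by rw [Finset.sum_mul]
    _ ≤ 1 * lam := mul_le_mul_of_nonneg_right hmain hlam0
    _ = lam := one_mul lam

lemma qInner_delta {ι : Type} [Fintype ι] (ψ : (ι → ZMod 2) → ℂ)
    (Φ : (ι → ZMod 2) → ℂ) (hval : ∀ x, Φ x = if x = 0 then 1 else 0) :
    qInner Φ ψ = ψ 0 := by
  rw [qInner]
  rw [Finset.sum_eq_single (0 : ι → ZMod 2)]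
  · rw [hval 0, if_pos rfl, map_one, one_mul]
  · intro x _ hx
    rw [hval x, if_neg hx, map_zero, zero_mul]
  · intro h
    exact absurd (Finset.mem_univ _) h

lemma delta_attains
    (ψ' : (HEdge N → ZMod 2) → ℂ)
    (hmod : ∀ x ∈ (Cface N : Set (HEdge N → ZMod 2)),
      ‖ψ' x‖ = (Real.sqrt (Nat.card (Cface N)))⁻¹) :
    ∃ Φ : (HEdge N → ZMod 2) → ℂ, IsProductState Φ ∧
      ‖qInner Φ ψ'‖ = (Real.sqrt (Nat.card (Cface N)))⁻¹ := by
  classical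
  set φ0 : HEdge N → ZMod 2 → ℂ := fun _ v => if v = 0 then 1 else 0 with hφ0
  set Φ0 : (HEdge N → ZMod 2) → ℂ := fun x => ∏ i, φ0 i (x i) with hΦ0
  have hval : ∀ x : HEdge N → ZMod 2, Φ0 x = if x = 0 then 1 else 0 := by
    intro x
    by_cases hx : x = 0
    · subst hx
      rw [if_pos rfl, hΦ0]
      apply Finset.prod_eq_one
      intro i _
      show (if (0 : HEdge N → ZMod 2) i = 0 then (1:ℂ) else 0) = 1
      rw [if_pos (by rw [Pi.zero_apply])]
    · rw [if_neg hx, hΦ0]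
      obtain ⟨i0, hi0⟩ := Function.ne_iff.mp hx
      apply Finset.prod_eq_zero (Finset.mem_univ i0)
      show (if x i0 = 0 then (1:ℂ) else 0) = 0
      rw [if_neg (by simpa using hi0)]
  refine ⟨Φ0, ⟨φ0, ?_, fun x => rfl⟩, ?_⟩
  · intro i
    show ‖(if (0 : ZMod 2) = 0 then (1:ℂ) else 0)‖ ^ 2
        + ‖(if (1 : ZMod 2) = 0 then (1:ℂ) else 0)‖ ^ 2 = 1
    rw [if_pos rfl, if_neg (by decide)]
    simp
  · rw [qInner_delta ψ' Φ0 hval]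
    exact hmod 0 (Submodule.zero_mem _)

end Analysis

/-- double semion theorem: any state ψ' supported on the face code
C_face whose nonzero amplitudes all have modulus |C_face|^{-1/2} (in particular the
double semion ground state |+,+⟩_DS, whose amplitudes are (−1)^{X_c}·|C_face|^{-1/2}
on C_face) has Λ_max = |C_face|^{-1/2} and geometric entanglement of spins
E_G = n_p − 1, with n_p = N²/2. -/
theorem double_semion_GE
    (N : ℕ) [NeZero N] (hpos : 0 < N) (h4 : N % 4 = 0)
    (ψ' : (HEdge N → ZMod 2) → ℂ)
    (hsupp : ∀ x, x ∉ (Cface N : Set (HEdge N → ZMod 2)) → ψ' x = 0)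
    (hmod : ∀ x ∈ (Cface N : Set (HEdge N → ZMod 2)),
      ‖ψ' x‖ = (Real.sqrt (Nat.card (Cface N)))⁻¹) :
    LambdaMax ψ' = (Real.sqrt (Nat.card (Cface N)))⁻¹ ∧
    EG ψ' = (N : ℝ) ^ 2 / 2 - 1 := by
  have h2 : 2 ∣ N := by omega
  have hN : 4 ≤ N := by omega
  set lam : ℝ := (Real.sqrt (Nat.card (Cface N)))⁻¹ with hlam
  obtain ⟨Φ0, hΦ0, hval⟩ := delta_attains ψ' hmod
  set S : Set ℝ := {r : ℝ | ∃ Φ, IsProductState Φ ∧ r = ‖qInner Φ ψ'‖} with hS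
  have hub : ∀ r ∈ S, r ≤ lam := by
    rintro r ⟨Φ, hΦ, rfl⟩
    exact overlap_le h2 hN ψ' hsupp hmod Φ hΦ
  have hmem : lam ∈ S := ⟨Φ0, hΦ0, hval.symm⟩
  have hLam : LambdaMax ψ' = lam := by
    rw [LambdaMax]
    apply le_antisymm
    · exact csSup_le ⟨lam, hmem⟩ hub
    · exact le_csSup ⟨lam, hub⟩ hmem
  refine ⟨hLam, ?_⟩
  set m : ℕ := N ^ 2 / 2 with hm
  obtain ⟨k, hk⟩ := id h2
  have hsqN : N ^ 2 = 4 * k ^ 2 := by rw [hk]; ring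
  have h2m : N ^ 2 = 2 * m := by omega
  have hm1 : 1 ≤ m := by nlinarith
  have hKval : Nat.card (Cface N) = 2 ^ (m - 1) := card_Cface h2 hN
  have hKpos : (0 : ℝ) < ((Nat.card (Cface N) : ℕ) : ℝ) := by
    rw [hKval]
    positivity
  have hsq : lam ^ 2 = (((Nat.card (Cface N) : ℕ) : ℝ))⁻¹ := by
    rw [hlam, inv_pow, Real.sq_sqrt hKpos.le]
  rw [EG, hLam, hsq]
  have hcast : (((Nat.card (Cface N) : ℕ) : ℝ)) = (2 : ℝ) ^ (m - 1) := by
    rw [hKval]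
    push_cast
    ring
  rw [Real.logb_inv, neg_neg, hcast, Real.logb_pow, Real.logb_self_eq_one (by norm_num), mul_one]
  have hcast2 : ((m - 1 : ℕ) : ℝ) = (m : ℝ) - 1 := by
    have := hm1
    push_cast [Nat.cast_sub hm1]
    ring
  rw [hcast2]
  have hmr : (m : ℝ) = (N : ℝ) ^ 2 / 2 := by
    have : ((N ^ 2 : ℕ) : ℝ) = ((2 * m : ℕ) : ℝ) := by rw [h2m]
    push_cast at this
    linarith
  rw [hmr]

end GeomEnt
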